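/- Let G be a finite simple graph on vertex set V, let S ⊆ V, and let G_S be the graph obtained from G by switching at the set S, i.e., for every pair {k,l} with exactly one of k, l in S the adjacency is toggled, and all other adjacencies are unchanged. If G has a proper vertex coloring with k colors, then G_S has a proper vertex coloring with 2k colors; in particular the chromatic number satisfies χ(G_S) ≤ 2·χ(G). -/

import Mathlib

/-- Switching a graph `G` at a set `S` of vertices: the adjacency of every pair with exactly
one endpoint in `S` is toggled; all other adjacencies are unchanged. -/
def setSwitching {V : Type*} (G : SimpleGraph V) (S : Set V) : SimpleGraph V where
  Adj k l := k ≠ l ∧ ¬ (G.Adj k l ↔ Xor' (k ∈ S) (l ∈ S))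
  symm := by
    constructor
    rintro k l ⟨h1, h2⟩
    refine ⟨h1.symm, ?_⟩
    rw [G.adj_comm l k]
    unfold Xor' at *
    simp only [xor_def] at *
    tauto
  loopless := by constructor; rintro k ⟨h1, -⟩; exact h1 rfl

lemma setSwitching_colorable_aux {V : Type*} (G : SimpleGraph V) (S : Set V) (k : ℕ)
    (h : G.Colorable k) : (setSwitching G S).Colorable (2 * k) := by
  classical
  obtain ⟨c⟩ := h
  let f : V → Fin k × Bool := fun v => (c v, decide (v ∈ S))
  have hc : ∀ {u v : V}, (setSwitching G S).Adj u v → f u ≠ f v := by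
    intro u v hadj hfe
    obtain ⟨hne, hnot⟩ := hadj
    have h1 : c u = c v := congrArg Prod.fst hfe
    have h2 : decide (u ∈ S) = decide (v ∈ S) := congrArg Prod.snd hfe
    have h3 : (u ∈ S) ↔ (v ∈ S) := by simpa using h2
    have hxor : ¬ Xor' (u ∈ S) (v ∈ S) := by unfold Xor'; simp only [xor_def]; tauto
    have hG : G.Adj u v := by tauto
    exact c.valid hG h1
  have coloring : (setSwitching G S).Coloring (Fin k × Bool) :=
    SimpleGraph.Coloring.mk f hc
  have := coloring.colorable
  simpa [Fintype.card_prod, mul_comm] using this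

/-- If `G` has a proper `k`-coloring then any switching of `G` at a set `S` has a proper
`2k`-coloring; in particular `χ(G_S) ≤ 2 χ(G)`. -/
theorem setSwitching_colorable {V : Type*} (G : SimpleGraph V) (S : Set V) (k : ℕ)
    (h : G.Colorable k) :
    (setSwitching G S).Colorable (2 * k) ∧
    (setSwitching G S).chromaticNumber ≤ 2 * G.chromaticNumber := by
  constructor
  · exact setSwitching_colorable_aux G S k h
  · rcases eq_or_ne G.chromaticNumber ⊤ with ht | ht
    · rw [ht]
      simp [ENat.mul_top]
    · obtain ⟨m, hGm⟩ := (SimpleGraph.chromaticNumber_ne_top_iff_exists).mp ht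
      have hcol : G.Colorable m := hGm
      -- χ(G) is some natural number n with G colorable n
      obtain ⟨n, hn⟩ : ∃ n : ℕ, G.chromaticNumber = n := by
        lift G.chromaticNumber to ℕ using ht with n hn
        exact ⟨n, rfl⟩
      have hGn : G.Colorable n :=
        SimpleGraph.chromaticNumber_le_iff_colorable.mp (le_of_eq hn)
      have h2n : (setSwitching G S).Colorable (2 * n) :=
        setSwitching_colorable_aux G S n hGn
      calc (setSwitching G S).chromaticNumber ≤ (2 * n : ℕ) := h2n.chromaticNumber_le
        _ = 2 * G.chromaticNumber := by rw [hn]; push_cast; ring
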